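/- Let (ρ_m) be a stationary family of density matrices satisfying the weak mixing condition: for all m and all a, b on H^{⊗m}, lim_{n→∞} (1/n) Σ_{i=m}^n |tr(ρ_{m+i} (a ⊗ I^{⊗(i−m)} ⊗ b)) − tr(ρ_m a) tr(ρ_m b)| = 0. Then for any trace-preserving Kraus map ℰ, the family (ℰ^{⊗m}(ρ_m)) is also weakly mixing. -/

import Mathlib

open Matrix Finset Filter Topology

/-- Operators on the `m`-fold tensor power of a `d`-dimensional Hilbert space,
realized as matrices indexed by `Fin m → Fin d`. -/
abbrev MP (d m : ℕ) := Matrix (Fin m → Fin d) (Fin m → Fin d) ℂ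

/-- The tensor (Kronecker) product of `m` one-site matrices. -/
def kron {d : ℕ} (m : ℕ) (B : Fin m → Matrix (Fin d) (Fin d) ℂ) : MP d m :=
  Matrix.of fun x y => ∏ k, B k (x k) (y k)

/-- The `m`-fold tensor product channel `ℰ^{⊗ m}` of the Kraus map
`ℰ(ρ) = ∑ j, A j * ρ * (A j)ᴴ`. -/
noncomputable def tensorE {d : ℕ} {ι : Type} [Fintype ι] (A : ι → Matrix (Fin d) (Fin d) ℂ) (m : ℕ)
    (ρ : MP d m) : MP d m :=
  ∑ j : Fin m → ι, kron m (fun k => A (j k)) * ρ * (kron m (fun k => A (j k)))ᴴ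

/-- The `m`-fold tensor product `(ℰ*)^{⊗ m}` of the dual (Heisenberg picture) map
`ℰ*(a) = ∑ j, (A j)ᴴ * a * A j`. -/
noncomputable def tensorDual {d : ℕ} {ι : Type} [Fintype ι] (A : ι → Matrix (Fin d) (Fin d) ℂ) (m : ℕ)
    (a : MP d m) : MP d m :=
  ∑ j : Fin m → ι, (kron m (fun k => A (j k)))ᴴ * a * kron m (fun k => A (j k))

/-- The operator `a ⊗ I^{⊗(i-m)} ⊗ b` on `H^{⊗(m+i)}` (for `m ≤ i`), where `a` acts on the
first `m` sites, `b` acts on the sites `i,…,i+m-1`, and identity acts in between. -/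
def sandw (d m i : ℕ) (a b : MP d m) : MP d (m + i) :=
  Matrix.of fun x y =>
    a (fun k => x (Fin.castLE (Nat.le_add_right m i) k))
      (fun k => y (Fin.castLE (Nat.le_add_right m i) k)) *
    b (fun k => x ⟨i + k.1, by have := k.2; omega⟩) (fun k => y ⟨i + k.1, by have := k.2; omega⟩) *
    ∏ j : Fin (m + i), if m ≤ (j : ℕ) ∧ (j : ℕ) < i then (if x j = y j then (1:ℂ) else 0) else 1

/-- The operator `a ⊗ I^{⊗ i}` on `H^{⊗(m+i)}`. -/
def rightPad (d m i : ℕ) (a : MP d m) : MP d (m + i) :=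
  Matrix.of fun x y =>
    a (fun k => x (Fin.castLE (Nat.le_add_right m i) k))
      (fun k => y (Fin.castLE (Nat.le_add_right m i) k)) *
    ∏ j : Fin (m + i), if m ≤ (j : ℕ) then (if x j = y j then (1:ℂ) else 0) else 1

/-- The operator `I^{⊗ i} ⊗ a` on `H^{⊗(m+i)}`. -/
def leftPad (d m i : ℕ) (a : MP d m) : MP d (m + i) :=
  Matrix.of fun x y =>
    a (fun k => x ⟨i + k.1, by have := k.2; omega⟩) (fun k => y ⟨i + k.1, by have := k.2; omega⟩) *
    ∏ j : Fin (m + i), if (j : ℕ) < i then (if x j = y j then (1:ℂ) else 0) else 1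

section Split
variable (m i : ℕ)

def glue {X : Type*} (p : Fin m → X) (q : Fin (i - m) → X) (r : Fin m → X)
    (j : Fin (m + i)) : X :=
  if h1 : (j : ℕ) < m then p ⟨j, h1⟩
  else if h2 : (j : ℕ) < i then q ⟨(j : ℕ) - m, by omega⟩
  else r ⟨(j : ℕ) - i, by have := j.2; omega⟩

@[simp] lemma glue_fst {X : Type*} {p : Fin m → X} {q : Fin (i - m) → X} {r : Fin m → X}
    (k : Fin m) : glue m i p q r (Fin.castLE (Nat.le_add_right m i) k) = p k := by
  rw [glue, dif_pos (show ((Fin.castLE (Nat.le_add_right m i) k : Fin (m + i)) : ℕ) < m from k.2)]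
  exact congrArg p (Fin.ext rfl)

@[simp] lemma glue_mid {X : Type*} {p : Fin m → X} {q : Fin (i - m) → X} {r : Fin m → X}
    (k : Fin (i - m)) (hk : m + (k : ℕ) < m + i) :
    glue m i p q r ⟨m + (k : ℕ), hk⟩ = q k := by
  have h2 : m + (k : ℕ) < i := by have := k.2; omega
  rw [glue, dif_neg (show ¬ (m + (k : ℕ) < m) by omega), dif_pos (show m + (k : ℕ) < i from h2)]
  exact congrArg q (Fin.ext (by simp))

lemma glue_last {X : Type*} (h : m ≤ i) {p : Fin m → X} {q : Fin (i - m) → X} {r : Fin m → X}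
    (k : Fin m) (hk : i + (k : ℕ) < m + i) :
    glue m i p q r ⟨i + (k : ℕ), hk⟩ = r k := by
  rw [glue, dif_neg (show ¬ (i + (k : ℕ) < m) by omega),
    dif_neg (show ¬ (i + (k : ℕ) < i) by omega)]
  exact congrArg r (Fin.ext (by simp))

def splitIdx (h : m ≤ i) : Fin m ⊕ (Fin (i - m) ⊕ Fin m) ≃ Fin (m + i) where
  toFun := Sum.elim (Fin.castLE (Nat.le_add_right m i))
    (Sum.elim (fun k => ⟨m + (k : ℕ), by have := k.2; omega⟩)
      (fun k => ⟨i + (k : ℕ), by have := k.2; omega⟩))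
  invFun j :=
    if h1 : (j : ℕ) < m then .inl ⟨j, h1⟩
    else if h2 : (j : ℕ) < i then .inr (.inl ⟨(j : ℕ) - m, by omega⟩)
    else .inr (.inr ⟨(j : ℕ) - i, by have := j.2; omega⟩)
  left_inv := by
    rintro (k | k | k) <;> dsimp only [Sum.elim_inl, Sum.elim_inr]
    · rw [dif_pos (show ((Fin.castLE (Nat.le_add_right m i) k : Fin (m + i)) : ℕ) < m from k.2)]
      exact congrArg Sum.inl (Fin.ext rfl)
    · have h2 : m + (k : ℕ) < i := by have := k.2; omega
      rw [dif_neg (show ¬ (m + (k : ℕ) < m) by omega), dif_pos (show m + (k : ℕ) < i from h2)]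
      exact congrArg (fun t => Sum.inr (Sum.inl t)) (Fin.ext (by simp))
    · rw [dif_neg (show ¬ (i + (k : ℕ) < m) by omega),
        dif_neg (show ¬ (i + (k : ℕ) < i) by omega)]
      exact congrArg (fun t => Sum.inr (Sum.inr t)) (Fin.ext (by simp))
  right_inv := by
    intro j
    dsimp only
    by_cases h1 : (j : ℕ) < m
    · rw [dif_pos h1]; exact Fin.ext rfl
    · by_cases h2 : (j : ℕ) < i
      · rw [dif_neg h1, dif_pos h2]
        exact Fin.ext (by simp; omega)
      · rw [dif_neg h1, dif_neg h2]
        exact Fin.ext (by simp; omega)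

lemma prod_split {M : Type*} [CommMonoid M] (h : m ≤ i) (g : Fin (m + i) → M) :
    ∏ t, g t = (∏ k : Fin m, g (Fin.castLE (Nat.le_add_right m i) k)) *
      ((∏ k : Fin (i - m), g ⟨m + (k : ℕ), by have := k.2; omega⟩) *
       (∏ k : Fin m, g ⟨i + (k : ℕ), by have := k.2; omega⟩)) := by
  rw [← Equiv.prod_comp (splitIdx m i h) g, Fintype.prod_sum_type, Fintype.prod_sum_type]
  rfl

def splitFun (h : m ≤ i) (X : Type*) :
    ((Fin m → X) × (Fin (i - m) → X) × (Fin m → X)) ≃ (Fin (m + i) → X) where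
  toFun t := glue m i t.1 t.2.1 t.2.2
  invFun f := (fun k => f (Fin.castLE (Nat.le_add_right m i) k),
    fun k => f ⟨m + (k : ℕ), by have := k.2; omega⟩,
    fun k => f ⟨i + (k : ℕ), by have := k.2; omega⟩)
  left_inv := by
    rintro ⟨p, q, r⟩
    refine Prod.ext ?_ (Prod.ext ?_ ?_) <;> funext k
    · exact glue_fst m i k
    · exact glue_mid m i k _
    · exact glue_last m i h k _
  right_inv := by
    intro f
    funext j
    dsimp only
    rw [glue]
    by_cases h1 : (j : ℕ) < m
    · rw [dif_pos h1]; exact congrArg f (Fin.ext rfl)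
    · by_cases h2 : (j : ℕ) < i
      · rw [dif_neg h1, dif_pos h2]
        exact congrArg f (Fin.ext (by simp; omega))
      · rw [dif_neg h1, dif_neg h2]
        exact congrArg f (Fin.ext (by simp; omega))

end Split

section Aux
variable {d : ℕ} {ι : Type} [Fintype ι]

lemma trace_tensorE_mul (A : ι → Matrix (Fin d) (Fin d) ℂ) (k : ℕ) (ρ X : MP d k) :
    (tensorE A k ρ * X).trace = (ρ * tensorDual A k X).trace := by
  simp only [tensorE, tensorDual, Finset.sum_mul, Finset.mul_sum, Matrix.trace_sum]
  refine Finset.sum_congr rfl fun j _ => ?_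
  rw [Matrix.mul_assoc, Matrix.mul_assoc, Matrix.trace_mul_comm, Matrix.mul_assoc,
    Matrix.mul_assoc, ← Matrix.mul_assoc ((kron k fun t => A (j t))ᴴ)]

def mixEquiv (ι X : Type) (k : ℕ) :
    (Fin k → ι × X × X) ≃ (Fin k → ι) × (Fin k → X) × (Fin k → X) :=
  (Equiv.arrowProdEquivProdArrow (Fin k) (fun _ => ι) (fun _ => X × X)).trans
    ((Equiv.refl (Fin k → ι)).prodCongr (Equiv.arrowProdEquivProdArrow (Fin k) (fun _ => X) (fun _ => X)))

lemma tensorDual_apply (A : ι → Matrix (Fin d) (Fin d) ℂ) (k : ℕ) (S : MP d k)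
    (x y : Fin k → Fin d) :
    tensorDual A k S x y =
      ∑ F : Fin k → ι × Fin d × Fin d,
        S (fun t => (F t).2.1) (fun t => (F t).2.2) *
          ∏ t, star (A (F t).1 ((F t).2.1) (x t)) * A (F t).1 ((F t).2.2) (y t) := by
  classical
  have key := Equiv.sum_comp (mixEquiv ι (Fin d) k)
    (fun p : (Fin k → ι) × (Fin k → Fin d) × (Fin k → Fin d) =>
      S p.2.1 p.2.2 * ∏ t, star (A (p.1 t) (p.2.1 t) (x t)) * A (p.1 t) (p.2.2 t) (y t))
  refine Eq.trans ?_ (Eq.trans key (by rfl)).symm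
  rw [Fintype.sum_prod_type]
  simp only [Fintype.sum_prod_type]
  simp only [tensorDual, Matrix.sum_apply, Matrix.mul_apply, Matrix.conjTranspose_apply,
    kron, Matrix.of_apply]
  refine Finset.sum_congr rfl fun j _ => ?_
  rw [Finset.sum_comm]
  refine Finset.sum_congr rfl fun u _ => ?_
  rw [Finset.sum_mul]
  refine Finset.sum_congr rfl fun v _ => ?_
  rw [Finset.prod_mul_distrib, star_prod]
  ring
end Aux

section Aux2
variable {d : ℕ} {ι : Type} [Fintype ι]

lemma mid_sum (A : ι → Matrix (Fin d) (Fin d) ℂ) (hA : ∑ j, (A j)ᴴ * A j = 1)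
    (n : ℕ) (x y : Fin n → Fin d) :
    ∑ F : Fin n → ι × Fin d × Fin d,
      (∏ k, (if (F k).2.1 = (F k).2.2 then (1:ℂ) else 0)) *
        ∏ k, star (A (F k).1 ((F k).2.1) (x k)) * A (F k).1 ((F k).2.2) (y k)
      = ∏ k, (if x k = y k then (1:ℂ) else 0) := by
  classical
  have step : ∀ F : Fin n → ι × Fin d × Fin d,
      (∏ k, (if (F k).2.1 = (F k).2.2 then (1:ℂ) else 0)) *
        ∏ k, star (A (F k).1 ((F k).2.1) (x k)) * A (F k).1 ((F k).2.2) (y k)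
      = ∏ k, ((if (F k).2.1 = (F k).2.2 then (1:ℂ) else 0) *
          (star (A (F k).1 ((F k).2.1) (x k)) * A (F k).1 ((F k).2.2) (y k))) :=
    fun F => (Finset.prod_mul_distrib).symm
  rw [Finset.sum_congr rfl fun F _ => step F]
  rw [← Fintype.prod_sum (fun k (z : ι × Fin d × Fin d) =>
      (if z.2.1 = z.2.2 then (1:ℂ) else 0) * (star (A z.1 z.2.1 (x k)) * A z.1 z.2.2 (y k)))]
  refine Finset.prod_congr rfl fun k _ => ?_
  have h1 : (∑ j, (A j)ᴴ * A j) (x k) (y k) = (1 : Matrix (Fin d) (Fin d) ℂ) (x k) (y k) := by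
    rw [hA]
  simp only [Matrix.sum_apply, Matrix.mul_apply, Matrix.conjTranspose_apply,
    Matrix.one_apply] at h1
  rw [← h1]
  simp only [Fintype.sum_prod_type]
  refine Finset.sum_congr rfl fun α _ => ?_
  refine Finset.sum_congr rfl fun β _ => ?_
  simp [ite_mul, Finset.sum_ite_eq, Finset.mem_univ]

lemma dual_sandw (A : ι → Matrix (Fin d) (Fin d) ℂ) (hA : ∑ j, (A j)ᴴ * A j = 1)
    (m i : ℕ) (h : m ≤ i) (a b : MP d m) :
    tensorDual A (m + i) (sandw d m i a b) = sandw d m i (tensorDual A m a) (tensorDual A m b) := by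
  classical
  ext x y
  rw [tensorDual_apply]
  simp only [sandw, Matrix.of_apply, tensorDual_apply]
  have hδ : (∏ t : Fin (m + i), if m ≤ (t : ℕ) ∧ (t : ℕ) < i then (if x t = y t then (1:ℂ) else 0) else 1)
      = ∑ F₂ : Fin (i - m) → ι × Fin d × Fin d,
          (∏ k, (if (F₂ k).2.1 = (F₂ k).2.2 then (1:ℂ) else 0)) *
            ∏ k, star (A (F₂ k).1 ((F₂ k).2.1) (x ⟨m + (k : ℕ), by have := k.2; omega⟩)) *
              A (F₂ k).1 ((F₂ k).2.2) (y ⟨m + (k : ℕ), by have := k.2; omega⟩) := by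
    rw [mid_sum A hA (i - m) (fun k => x ⟨m + (k : ℕ), by have := k.2; omega⟩)
      (fun k => y ⟨m + (k : ℕ), by have := k.2; omega⟩)]
    rw [prod_split m i h]
    have e1 : (∏ k : Fin m,
        if m ≤ ((Fin.castLE (Nat.le_add_right m i) k : Fin (m + i)) : ℕ) ∧
            ((Fin.castLE (Nat.le_add_right m i) k : Fin (m + i)) : ℕ) < i then
          (if x (Fin.castLE (Nat.le_add_right m i) k) = y (Fin.castLE (Nat.le_add_right m i) k)
            then (1:ℂ) else 0) else 1) = 1 :=
      Finset.prod_eq_one fun k _ => if_neg (show ¬ (m ≤ (k : ℕ) ∧ (k : ℕ) < i) by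
        have := k.2; omega)
    have e3 : (∏ k : Fin m,
        if m ≤ (((⟨i + (k : ℕ), by have := k.2; omega⟩ : Fin (m + i))) : ℕ) ∧
            (((⟨i + (k : ℕ), by have := k.2; omega⟩ : Fin (m + i))) : ℕ) < i then
          (if x ⟨i + (k : ℕ), by have := k.2; omega⟩ = y ⟨i + (k : ℕ), by have := k.2; omega⟩
            then (1:ℂ) else 0) else 1) = 1 :=
      Finset.prod_eq_one fun k _ => if_neg (show ¬ (m ≤ i + (k : ℕ) ∧ i + (k : ℕ) < i) by omega)
    rw [e1, e3, one_mul, mul_one]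
    refine Finset.prod_congr rfl fun k _ => if_pos (show m ≤ m + (k : ℕ) ∧ m + (k : ℕ) < i from
      ⟨Nat.le_add_right m _, by have := k.2; omega⟩)
  rw [hδ]
  simp only [Finset.sum_mul, Finset.mul_sum]
  rw [← Equiv.sum_comp (splitFun m i h (ι × Fin d × Fin d))]
  simp only [Fintype.sum_prod_type, splitFun, Equiv.coe_fn_mk]
  conv_lhs => rw [Finset.sum_comm]
  refine Finset.sum_congr rfl fun F₂ _ => ?_
  rw [Finset.sum_comm]
  refine Finset.sum_congr rfl fun F₃ _ => Finset.sum_congr rfl fun F₁ _ => ?_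
  rw [prod_split m i h, prod_split m i h]
  simp only [glue_fst, glue_mid, glue_last m i h]
  have c1 : ∀ (k : Fin m) (c : ℂ),
      (if m ≤ ((Fin.castLE (Nat.le_add_right m i) k : Fin (m + i)) : ℕ) ∧
          ((Fin.castLE (Nat.le_add_right m i) k : Fin (m + i)) : ℕ) < i then c else 1) = 1 :=
    fun k c => if_neg (show ¬ (m ≤ (k : ℕ) ∧ (k : ℕ) < i) by have := k.2; omega)
  have c3 : ∀ (k : Fin m) (c : ℂ),
      (if m ≤ i + (k : ℕ) ∧ i + (k : ℕ) < i then c else 1) = 1 :=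
    fun k c => if_neg (by omega)
  have c2 : ∀ (k : Fin (i - m)) (c : ℂ),
      (if m ≤ m + (k : ℕ) ∧ m + (k : ℕ) < i then c else 1) = c :=
    fun k c => if_pos ⟨Nat.le_add_right _ _, show m + (k : ℕ) < i by have := k.2; omega⟩
  simp only [c1, c2, c3, Finset.prod_const_one, one_mul, mul_one]
  ring
end Aux2

open scoped ComplexOrder

/-- A tensor-product trace-preserving Kraus map preserves the weak mixing property of a
stationary family of density matrices. -/
theorem tensorE_preserves_weak_mixing {d : ℕ} {ι : Type} [Fintype ι]
    (A : ι → Matrix (Fin d) (Fin d) ℂ)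
    (hA : ∑ j, (A j)ᴴ * A j = 1)
    (ρ : (m : ℕ) → MP d m)
    -- each `ρ m` is a density matrix
    (hdens : ∀ m, (ρ m).PosSemidef ∧ (ρ m).trace = 1)
    -- stationarity: `tr(ρ_m a) = tr(ρ_{m+i} (I^{⊗ i} ⊗ a))`
    (hstat : ∀ m i : ℕ, ∀ a : MP d m,
      (ρ m * a).trace = (ρ (m + i) * leftPad d m i a).trace)
    -- weak mixing
    (hwm : ∀ m : ℕ, ∀ a b : MP d m,
      Tendsto (fun n : ℕ => (1 / (n : ℝ)) *
          ∑ i ∈ Finset.Icc m n,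
            ‖(ρ (m + i) * sandw d m i a b).trace -
              (ρ m * a).trace * (ρ m * b).trace‖)
        atTop (𝓝 0)) :
    ∀ m : ℕ, ∀ a b : MP d m,
      Tendsto (fun n : ℕ => (1 / (n : ℝ)) *
          ∑ i ∈ Finset.Icc m n,
            ‖(tensorE A (m + i) (ρ (m + i)) * sandw d m i a b).trace -
              (tensorE A m (ρ m) * a).trace * (tensorE A m (ρ m) * b).trace‖)
        atTop (𝓝 0) := by
  intro m a b
  refine Tendsto.congr ?_ (hwm m (tensorDual A m a) (tensorDual A m b))
  intro n
  congr 1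
  refine Finset.sum_congr rfl fun i hi => ?_
  have him : m ≤ i := (Finset.mem_Icc.mp hi).1
  rw [trace_tensorE_mul, trace_tensorE_mul, trace_tensorE_mul, dual_sandw A hA m i him]
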